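/- Let X, Y be random variables on finite alphabets 𝒳, 𝒴 and β ∈ [0,1]. Then the infimum defining C_β(X;Y) is unchanged if it is restricted to auxiliary random variables U whose alphabet 𝒰 satisfies |𝒰| ≤ |𝒳|·|𝒴| + 1. That is, for every finite-alphabet U jointly distributed with (X,Y) with ρ_m(X;Y|U) ≤ β, there exists U' with |𝒰'| ≤ |𝒳|·|𝒴| + 1, ρ_m(X;Y|U') = ρ_m(X;Y|U), and I(X,Y;U') = I(X,Y;U). -/

import Mathlib

open scoped BigOperators Classical

noncomputable section

namespace GCI

/-- A bundled finite alphabet. -/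
structure FinAlph : Type 1 where
  carrier : Type
  [fin : Fintype carrier]

instance : CoeSort FinAlph Type := ⟨FinAlph.carrier⟩
instance (A : FinAlph) : Fintype A := A.fin

variable {Ω : Type} [Fintype Ω]

/-- `p` is a probability mass function on the finite sample space `Ω`. -/
def IsPMF (p : Ω → ℝ) : Prop := (∀ ω, 0 ≤ p ω) ∧ ∑ ω, p ω = 1

/-- Expectation of a real random variable `f` under the pmf `p`. -/
def expec (p : Ω → ℝ) (f : Ω → ℝ) : ℝ := ∑ ω, p ω * f ω

/-- Marginal pmf of the random variable `X` under `p`. -/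
def marg {𝒳 : Type} (p : Ω → ℝ) (X : Ω → 𝒳) (x : 𝒳) : ℝ :=
  ∑ ω, if X ω = x then p ω else 0

/-- Conditional expectation `E[f | U = u]`. -/
def cexp {𝒰 : Type} (p : Ω → ℝ) (U : Ω → 𝒰) (u : 𝒰) (f : Ω → ℝ) : ℝ :=
  (∑ ω, if U ω = u then p ω * f ω else 0) / marg p U u

/-- `E[cov(f, g | U)]`. -/
def ccov {𝒰 : Type} (p : Ω → ℝ) (U : Ω → 𝒰) (f g : Ω → ℝ) : ℝ :=
  expec p fun ω => (f ω - cexp p U (U ω) f) * (g ω - cexp p U (U ω) g)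

/-- `E[var(f | U)]`. -/
def cvar {𝒰 : Type} (p : Ω → ℝ) (U : Ω → 𝒰) (f : Ω → ℝ) : ℝ := ccov p U f f

/-- Conditional Pearson correlation `ρ(f; g | U)`. -/
def ccorr {𝒰 : Type} (p : Ω → ℝ) (U : Ω → 𝒰) (f g : Ω → ℝ) : ℝ :=
  if 0 < cvar p U f * cvar p U g then
    ccov p U f g / (Real.sqrt (cvar p U f) * Real.sqrt (cvar p U g))
  else 0

/-- Conditional correlation ratio `θ(X; Y | U)` for a real-valued `X`. -/
def cratio {𝒴 𝒰 : Type} (p : Ω → ℝ) (U : Ω → 𝒰) (X : Ω → ℝ) (Y : Ω → 𝒴) : ℝ :=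
  ⨆ g : 𝒴 × 𝒰 → ℝ, ccorr p U X fun ω => g (Y ω, U ω)

/-- Conditional maximal correlation `ρ_m(X; Y | U)`. -/
def maxCorr {𝒳 𝒴 𝒰 : Type} (p : Ω → ℝ) (U : Ω → 𝒰) (X : Ω → 𝒳) (Y : Ω → 𝒴) : ℝ :=
  ⨆ f : 𝒳 × 𝒰 → ℝ, ⨆ g : 𝒴 × 𝒰 → ℝ,
    ccorr p U (fun ω => f (X ω, U ω)) fun ω => g (Y ω, U ω)

/-- Unconditional Pearson correlation. -/
def corr0 (p : Ω → ℝ) (f g : Ω → ℝ) : ℝ := ccorr p (fun _ => ()) f g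

/-- Unconditional correlation ratio `θ(X;Y)`. -/
def ratio0 {𝒴 : Type} (p : Ω → ℝ) (X : Ω → ℝ) (Y : Ω → 𝒴) : ℝ :=
  cratio p (fun _ => ()) X Y

/-- Unconditional maximal correlation `ρ_m(X;Y)`. -/
def maxCorr0 {𝒳 𝒴 : Type} (p : Ω → ℝ) (X : Ω → 𝒳) (Y : Ω → 𝒴) : ℝ :=
  maxCorr p (fun _ => ()) X Y

/-- Shannon entropy (base 2) of the random variable `X` under `p`. -/
def ent {𝒳 : Type} [Fintype 𝒳] (p : Ω → ℝ) (X : Ω → 𝒳) : ℝ :=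
  ∑ x, -(marg p X x * Real.logb 2 (marg p X x))

/-- Conditional Shannon entropy `H(X | U)`. -/
def condEnt {𝒳 𝒰 : Type} [Fintype 𝒳] [Fintype 𝒰] (p : Ω → ℝ) (X : Ω → 𝒳) (U : Ω → 𝒰) : ℝ :=
  ent p (fun ω => (X ω, U ω)) - ent p U

/-- Mutual information `I(X; U)`. -/
def mutInfo {𝒳 𝒰 : Type} [Fintype 𝒳] [Fintype 𝒰] (p : Ω → ℝ) (X : Ω → 𝒳) (U : Ω → 𝒰) : ℝ :=
  ent p X + ent p U - ent p fun ω => (X ω, U ω)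

/-- Almost-sure equality of two discrete random variables. -/
def AEEq {𝒱 : Type} (p : Ω → ℝ) (f g : Ω → 𝒱) : Prop := ∀ ω, 0 < p ω → f ω = g ω

/-- The Gács–Körner common information `C_GK(X;Y)`. -/
def CGK {𝒳 𝒴 : Type} (p : Ω → ℝ) (X : Ω → 𝒳) (Y : Ω → 𝒴) : ℝ :=
  sSup { r | ∃ (𝒱 : FinAlph) (f : 𝒳 → 𝒱) (g : 𝒴 → 𝒱),
    AEEq p (fun ω => f (X ω)) (fun ω => g (Y ω)) ∧ r = ent p fun ω => f (X ω) }

/-- The conditional Gács–Körner common information `C_GK(X;Y|U)`. -/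
def CGKcond {𝒳 𝒴 𝒰 : Type} [Fintype 𝒰] (p : Ω → ℝ) (X : Ω → 𝒳) (Y : Ω → 𝒴)
    (U : Ω → 𝒰) : ℝ :=
  sSup { r | ∃ (𝒱 : FinAlph) (f : 𝒳 × 𝒰 → 𝒱) (g : 𝒴 × 𝒰 → 𝒱),
    AEEq p (fun ω => f (X ω, U ω)) (fun ω => g (Y ω, U ω)) ∧
    r = condEnt p (fun ω => f (X ω, U ω)) U }

/-- The `β`-approximate common information (approximate information-correlation function). -/
def Cbeta {𝒳 𝒴 : Type} [Fintype 𝒳] [Fintype 𝒴] (p : 𝒳 × 𝒴 → ℝ) (β : ℝ) : ℝ :=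
  sInf { r | ∃ (𝒰 : FinAlph) (q : (𝒳 × 𝒴) × 𝒰 → ℝ),
    IsPMF q ∧ (∀ a, marg q Prod.fst a = p a) ∧
    maxCorr q Prod.snd (fun a => a.1.1) (fun a => a.1.2) ≤ β ∧
    r = mutInfo q Prod.fst Prod.snd }

/-- The `n`-th term in the definition of the `β`-exact common information:
the normalized smallest entropy of an auxiliary variable for `n` i.i.d. copies. -/
def KbetaN {𝒳 𝒴 : Type} [Fintype 𝒳] [Fintype 𝒴] (p : 𝒳 × 𝒴 → ℝ) (β : ℝ) (n : ℕ) : ℝ :=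
  sInf { r | ∃ (𝒰 : FinAlph) (q : ((Fin n → 𝒳) × (Fin n → 𝒴)) × 𝒰 → ℝ),
    IsPMF q ∧
    (∀ a : (Fin n → 𝒳) × (Fin n → 𝒴), marg q Prod.fst a = ∏ i, p (a.1 i, a.2 i)) ∧
    maxCorr q Prod.snd (fun a => a.1.1) (fun a => a.1.2) ≤ β ∧
    r = (1 / (n : ℝ)) * ent q Prod.snd }

/-- The `β`-exact common information (exact information-correlation function). -/
def Kbeta {𝒳 𝒴 : Type} [Fintype 𝒳] [Fintype 𝒴] (p : 𝒳 × 𝒴 → ℝ) (β : ℝ) : ℝ :=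
  Filter.limUnder Filter.atTop fun n => KbetaN p β n


section AuxA

open Finset

variable {Ω : Type} [Fintype Ω] {𝒰 : Type}

lemma weighted_cs {p A B : Ω → ℝ} (hp : ∀ ω, 0 ≤ p ω) :
    ∑ ω, p ω * (A ω * B ω) ≤
      Real.sqrt (∑ ω, p ω * A ω ^ 2) * Real.sqrt (∑ ω, p ω * B ω ^ 2) := by
  have h := Finset.sum_mul_sq_le_sq_mul_sq Finset.univ
    (fun ω => Real.sqrt (p ω) * A ω) (fun ω => Real.sqrt (p ω) * B ω)
  have e1 : ∑ ω, (Real.sqrt (p ω) * A ω) * (Real.sqrt (p ω) * B ω)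
      = ∑ ω, p ω * (A ω * B ω) :=
    Finset.sum_congr rfl fun ω _ => by
      rw [mul_mul_mul_comm, Real.mul_self_sqrt (hp ω)]
  have e2 : ∑ ω, (Real.sqrt (p ω) * A ω) ^ 2 = ∑ ω, p ω * A ω ^ 2 :=
    Finset.sum_congr rfl fun ω _ => by rw [mul_pow, Real.sq_sqrt (hp ω)]
  have e3 : ∑ ω, (Real.sqrt (p ω) * B ω) ^ 2 = ∑ ω, p ω * B ω ^ 2 :=
    Finset.sum_congr rfl fun ω _ => by rw [mul_pow, Real.sq_sqrt (hp ω)]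
  rw [e1, e2, e3] at h
  calc ∑ ω, p ω * (A ω * B ω) ≤ |∑ ω, p ω * (A ω * B ω)| := le_abs_self _
    _ = Real.sqrt ((∑ ω, p ω * (A ω * B ω)) ^ 2) := (Real.sqrt_sq_eq_abs _).symm
    _ ≤ Real.sqrt ((∑ ω, p ω * A ω ^ 2) * ∑ ω, p ω * B ω ^ 2) := Real.sqrt_le_sqrt h
    _ = _ := Real.sqrt_mul (Finset.sum_nonneg fun ω _ =>
        mul_nonneg (hp ω) (sq_nonneg _)) _

lemma sum_sqrt_cs {ι : Type} [Fintype ι] {x y : ι → ℝ} (hx : ∀ i, 0 ≤ x i)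
    (hy : ∀ i, 0 ≤ y i) :
    ∑ i, Real.sqrt (x i) * Real.sqrt (y i) ≤
      Real.sqrt (∑ i, x i) * Real.sqrt (∑ i, y i) := by
  have h := Finset.sum_mul_sq_le_sq_mul_sq Finset.univ
    (fun i => Real.sqrt (x i)) (fun i => Real.sqrt (y i))
  have e2 : ∑ i, Real.sqrt (x i) ^ 2 = ∑ i, x i :=
    Finset.sum_congr rfl fun i _ => Real.sq_sqrt (hx i)
  have e3 : ∑ i, Real.sqrt (y i) ^ 2 = ∑ i, y i :=
    Finset.sum_congr rfl fun i _ => Real.sq_sqrt (hy i)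
  rw [e2, e3] at h
  calc ∑ i, Real.sqrt (x i) * Real.sqrt (y i)
      ≤ |∑ i, Real.sqrt (x i) * Real.sqrt (y i)| := le_abs_self _
    _ = Real.sqrt ((∑ i, Real.sqrt (x i) * Real.sqrt (y i)) ^ 2) :=
        (Real.sqrt_sq_eq_abs _).symm
    _ ≤ Real.sqrt ((∑ i, x i) * ∑ i, y i) := Real.sqrt_le_sqrt h
    _ = _ := Real.sqrt_mul (Finset.sum_nonneg fun i _ => hx i) _

lemma cvar_eq (p : Ω → ℝ) (U : Ω → 𝒰) (f : Ω → ℝ) :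
    cvar p U f = ∑ ω, p ω * (f ω - cexp p U (U ω) f) ^ 2 := by
  unfold cvar ccov expec
  exact Finset.sum_congr rfl fun ω _ => by ring

lemma cvar_nonneg {p : Ω → ℝ} (hp : ∀ ω, 0 ≤ p ω) (U : Ω → 𝒰) (f : Ω → ℝ) :
    0 ≤ cvar p U f := by
  rw [cvar_eq]
  exact Finset.sum_nonneg fun ω _ => mul_nonneg (hp ω) (sq_nonneg _)

lemma ccov_le {p : Ω → ℝ} (hp : ∀ ω, 0 ≤ p ω) (U : Ω → 𝒰) (f g : Ω → ℝ) :
    ccov p U f g ≤ Real.sqrt (cvar p U f) * Real.sqrt (cvar p U g) := by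
  have h := weighted_cs (p := p) (A := fun ω => f ω - cexp p U (U ω) f)
    (B := fun ω => g ω - cexp p U (U ω) g) hp
  rw [cvar_eq, cvar_eq]
  unfold ccov expec
  calc ∑ ω, p ω * ((f ω - cexp p U (U ω) f) * (g ω - cexp p U (U ω) g)) ≤ _ := h

lemma ccorr_le_one {p : Ω → ℝ} (hp : ∀ ω, 0 ≤ p ω) (U : Ω → 𝒰) (f g : Ω → ℝ) :
    ccorr p U f g ≤ 1 := by
  unfold ccorr
  split
  · next h =>
    have hf : 0 ≤ cvar p U f := cvar_nonneg hp U f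
    have hg : 0 ≤ cvar p U g := cvar_nonneg hp U g
    have hpos : 0 < Real.sqrt (cvar p U f) * Real.sqrt (cvar p U g) := by
      rcases mul_pos_iff.mp h with ⟨h1, h2⟩ | ⟨h1, h2⟩
      · exact mul_pos (Real.sqrt_pos.2 h1) (Real.sqrt_pos.2 h2)
      · linarith
    rw [div_le_one hpos]
    exact ccov_le hp U f g
  · exact zero_le_one

lemma maxCorr_le {𝒳 𝒴 : Type} {p : Ω → ℝ} {U : Ω → 𝒰} {X : Ω → 𝒳} {Y : Ω → 𝒴}
    {M : ℝ}
    (hM : ∀ (f : 𝒳 × 𝒰 → ℝ) (g : 𝒴 × 𝒰 → ℝ),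
      ccorr p U (fun ω => f (X ω, U ω)) (fun ω => g (Y ω, U ω)) ≤ M) :
    maxCorr p U X Y ≤ M := by
  unfold maxCorr
  exact ciSup_le fun f => ciSup_le fun g => hM f g

lemma le_maxCorr {𝒳 𝒴 : Type} {p : Ω → ℝ} (hp : ∀ ω, 0 ≤ p ω) (U : Ω → 𝒰)
    (X : Ω → 𝒳) (Y : Ω → 𝒴) (f : 𝒳 × 𝒰 → ℝ) (g : 𝒴 × 𝒰 → ℝ) :
    ccorr p U (fun ω => f (X ω, U ω)) (fun ω => g (Y ω, U ω)) ≤ maxCorr p U X Y := by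
  have hb1 : ∀ f' : 𝒳 × 𝒰 → ℝ, BddAbove (Set.range fun g' : 𝒴 × 𝒰 → ℝ =>
      ccorr p U (fun ω => f' (X ω, U ω)) fun ω => g' (Y ω, U ω)) := fun f' =>
    ⟨1, Set.forall_mem_range.2 fun g' => ccorr_le_one hp U _ _⟩
  have h1 : ccorr p U (fun ω => f (X ω, U ω)) (fun ω => g (Y ω, U ω)) ≤
      ⨆ g' : 𝒴 × 𝒰 → ℝ, ccorr p U (fun ω => f (X ω, U ω)) fun ω => g' (Y ω, U ω) :=
    le_ciSup (hb1 f) g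
  have hb2 : BddAbove (Set.range fun f' : 𝒳 × 𝒰 → ℝ =>
      ⨆ g' : 𝒴 × 𝒰 → ℝ, ccorr p U (fun ω => f' (X ω, U ω)) fun ω => g' (Y ω, U ω)) :=
    ⟨1, Set.forall_mem_range.2 fun f' => ciSup_le fun g' => ccorr_le_one hp U _ _⟩
  exact h1.trans (le_ciSup hb2 f)

lemma ccorr_zero_zero (p : Ω → ℝ) (U : Ω → 𝒰) :
    ccorr p U (fun _ => (0 : ℝ)) (fun _ => (0 : ℝ)) = 0 := by
  have hz : cvar p U (fun _ => (0 : ℝ)) = 0 := by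
    unfold cvar ccov expec cexp
    simp
  unfold ccorr
  rw [hz]
  simp

lemma maxCorr_nonneg {𝒳 𝒴 : Type} {p : Ω → ℝ} (hp : ∀ ω, 0 ≤ p ω) (U : Ω → 𝒰)
    (X : Ω → 𝒳) (Y : Ω → 𝒴) : 0 ≤ maxCorr p U X Y := by
  have h := le_maxCorr hp U X Y (fun _ => 0) (fun _ => 0)
  rwa [ccorr_zero_zero] at h

end AuxA

section AuxB

open Finset

variable {𝒳 𝒴 𝒰 : Type} [Fintype 𝒳] [Fintype 𝒴] [Fintype 𝒰]

/-- Weight of `u` under `q`. -/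
def Wt (q : (𝒳 × 𝒴) × 𝒰 → ℝ) (u : 𝒰) : ℝ := ∑ a, q (a, u)

/-- Conditional distribution of `(X,Y)` given `U = u`. -/
def cnd (q : (𝒳 × 𝒴) × 𝒰 → ℝ) (u : 𝒰) : 𝒳 × 𝒴 → ℝ := fun a => q (a, u) / Wt q u

lemma Wt_nonneg {q : (𝒳 × 𝒴) × 𝒰 → ℝ} (hq0 : ∀ ω, 0 ≤ q ω) (u : 𝒰) :
    0 ≤ Wt q u := Finset.sum_nonneg fun a _ => hq0 (a, u)

lemma marg_snd (q : (𝒳 × 𝒴) × 𝒰 → ℝ) (u : 𝒰) :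
    marg q Prod.snd u = Wt q u := by
  unfold marg Wt
  rw [Fintype.sum_prod_type]
  exact Finset.sum_congr rfl fun a _ => by simp

lemma marg_fst (q : (𝒳 × 𝒴) × 𝒰 → ℝ) (a : 𝒳 × 𝒴) :
    marg q Prod.fst a = ∑ u, q (a, u) := by
  unfold marg
  rw [Fintype.sum_prod_type]
  rw [Finset.sum_eq_single a]
  · simp
  · intro b _ hb
    simp [hb]
  · simp

lemma sum_Wt {q : (𝒳 × 𝒴) × 𝒰 → ℝ} (hq1 : ∑ ω, q ω = 1) :
    ∑ u, Wt q u = 1 := by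
  unfold Wt
  rw [← Fintype.sum_prod_type_right]
  exact hq1

lemma cnd_nonneg {q : (𝒳 × 𝒴) × 𝒰 → ℝ} (hq0 : ∀ ω, 0 ≤ q ω) (u : 𝒰) (a : 𝒳 × 𝒴) :
    0 ≤ cnd q u a := div_nonneg (hq0 _) (Wt_nonneg hq0 u)

lemma sum_cnd {q : (𝒳 × 𝒴) × 𝒰 → ℝ} {u : 𝒰} (hW : Wt q u ≠ 0) :
    ∑ a, cnd q u a = 1 := by
  unfold cnd
  rw [← Finset.sum_div]
  exact div_self hW

lemma q_eq_cnd {q : (𝒳 × 𝒴) × 𝒰 → ℝ} {u : 𝒰} (hW : Wt q u ≠ 0) (a : 𝒳 × 𝒴) :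
    q (a, u) = Wt q u * cnd q u a := by
  unfold cnd
  rw [mul_div_cancel₀ _ hW]

lemma q_zero {q : (𝒳 × 𝒴) × 𝒰 → ℝ} (hq0 : ∀ ω, 0 ≤ q ω) {u : 𝒰}
    (hW : Wt q u = 0) (a : 𝒳 × 𝒴) : q (a, u) = 0 := by
  have := (Finset.sum_eq_zero_iff_of_nonneg (fun b _ => hq0 (b, u))).mp hW
  exact this a (Finset.mem_univ a)

/-- Unconditional maximal correlation of a distribution on `𝒳 × 𝒴`. -/
def rho (r : 𝒳 × 𝒴 → ℝ) : ℝ := maxCorr r (fun _ => ()) Prod.fst Prod.snd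

lemma cexp_unit {r : 𝒳 × 𝒴 → ℝ} (hr1 : ∑ a, r a = 1) (φ : 𝒳 × 𝒴 → ℝ) :
    cexp r (fun _ => ()) () φ = expec r φ := by
  unfold cexp marg expec
  simp [hr1]

lemma cexp_pair (q : (𝒳 × 𝒴) × 𝒰 → ℝ) (u : 𝒰) (h : (𝒳 × 𝒴) × 𝒰 → ℝ) :
    cexp q Prod.snd u h = (∑ a, q (a, u) * h (a, u)) / Wt q u := by
  unfold cexp
  rw [marg_snd]
  congr 1
  rw [Fintype.sum_prod_type]
  exact Finset.sum_congr rfl fun a _ => by simp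

lemma cexp_pair_pos {q : (𝒳 × 𝒴) × 𝒰 → ℝ} {u : 𝒰} (hW : Wt q u ≠ 0)
    (h : (𝒳 × 𝒴) × 𝒰 → ℝ) :
    cexp q Prod.snd u h = cexp (cnd q u) (fun _ => ()) () (fun a => h (a, u)) := by
  rw [cexp_pair, cexp_unit (sum_cnd hW)]
  unfold expec cnd
  rw [Finset.sum_div]
  exact Finset.sum_congr rfl fun a _ => by rw [div_mul_eq_mul_div]

lemma ccov_decomp {q : (𝒳 × 𝒴) × 𝒰 → ℝ} (hq0 : ∀ ω, 0 ≤ q ω)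
    (f g : (𝒳 × 𝒴) × 𝒰 → ℝ) :
    ccov q Prod.snd f g = ∑ u, Wt q u *
      ccov (cnd q u) (fun _ => ()) (fun a => f (a, u)) (fun a => g (a, u)) := by
  unfold ccov expec
  rw [Fintype.sum_prod_type_right]
  refine Finset.sum_congr rfl fun u _ => ?_
  by_cases hW : Wt q u = 0
  · rw [hW, zero_mul]
    exact Finset.sum_eq_zero fun a _ => by rw [q_zero hq0 hW a, zero_mul]
  · rw [Finset.mul_sum]
    refine Finset.sum_congr rfl fun a _ => ?_
    dsimp only
    rw [q_eq_cnd hW a, cexp_pair_pos hW f, cexp_pair_pos hW g]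
    ring

lemma cvar_decomp {q : (𝒳 × 𝒴) × 𝒰 → ℝ} (hq0 : ∀ ω, 0 ≤ q ω)
    (f : (𝒳 × 𝒴) × 𝒰 → ℝ) :
    cvar q Prod.snd f = ∑ u, Wt q u *
      cvar (cnd q u) (fun _ => ()) (fun a => f (a, u)) :=
  ccov_decomp hq0 f f

lemma ccov_le_rho {r : 𝒳 × 𝒴 → ℝ} (hr0 : ∀ a, 0 ≤ r a) (hr1 : ∑ a, r a = 1)
    (φ : 𝒳 × 𝒴 → ℝ) (ψ : 𝒳 × 𝒴 → ℝ)
    (hφ : ∃ f : 𝒳 × Unit → ℝ, φ = fun a => f (a.1, ()))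
    (hψ : ∃ g : 𝒴 × Unit → ℝ, ψ = fun a => g (a.2, ())) :
    ccov r (fun _ => ()) φ ψ ≤ rho r *
      (Real.sqrt (cvar r (fun _ => ()) φ) * Real.sqrt (cvar r (fun _ => ()) ψ)) := by
  obtain ⟨f, rfl⟩ := hφ
  obtain ⟨g, rfl⟩ := hψ
  by_cases hpos : 0 < cvar r (fun _ => ()) (fun a => f (a.1, ())) *
      cvar r (fun _ => ()) (fun a => g (a.2, ()))
  · have hcorr : ccorr r (fun _ => ()) (fun a => f (a.1, ())) (fun a => g (a.2, ()))
        ≤ rho r := le_maxCorr hr0 (fun _ => ()) Prod.fst Prod.snd f g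
    have hsq : 0 < Real.sqrt (cvar r (fun _ => ()) (fun a => f (a.1, ()))) *
        Real.sqrt (cvar r (fun _ => ()) (fun a => g (a.2, ()))) := by
      rcases mul_pos_iff.mp hpos with ⟨h1, h2⟩ | ⟨h1, h2⟩
      · exact mul_pos (Real.sqrt_pos.2 h1) (Real.sqrt_pos.2 h2)
      · have := cvar_nonneg hr0 (fun _ => ()) (fun a : 𝒳 × 𝒴 => f (a.1, ()))
        linarith
    unfold ccorr at hcorr
    rw [if_pos hpos, div_le_iff₀ hsq] at hcorr
    exact hcorr
  · have h1 : 0 ≤ cvar r (fun _ => ()) (fun a : 𝒳 × 𝒴 => f (a.1, ())) :=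
      cvar_nonneg hr0 _ _
    have h2 : 0 ≤ cvar r (fun _ => ()) (fun a : 𝒳 × 𝒴 => g (a.2, ())) :=
      cvar_nonneg hr0 _ _
    have hz : cvar r (fun _ => ()) (fun a : 𝒳 × 𝒴 => f (a.1, ())) = 0 ∨
        cvar r (fun _ => ()) (fun a : 𝒳 × 𝒴 => g (a.2, ())) = 0 := by
      rcases (mul_nonneg h1 h2).lt_or_eq with h | h
      · exact absurd h hpos
      · exact mul_eq_zero.mp h.symm
    have hcs := ccov_le hr0 (fun _ => ())
      (fun a : 𝒳 × 𝒴 => f (a.1, ())) (fun a : 𝒳 × 𝒴 => g (a.2, ()))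
    rcases hz with h | h <;> rw [h] at hcs ⊢ <;>
      simp only [Real.sqrt_zero, zero_mul, mul_zero] at hcs ⊢ <;> linarith

end AuxB

section AuxC

open Finset

variable {𝒳 𝒴 𝒰 : Type} [Fintype 𝒳] [Fintype 𝒴] [Fintype 𝒰]

lemma ccov_zero_left {Ω : Type} [Fintype Ω] {𝒱 : Type} (p : Ω → ℝ) (U : Ω → 𝒱)
    (g : Ω → ℝ) : ccov p U (fun _ => (0 : ℝ)) g = 0 := by
  unfold ccov expec cexp
  simp

lemma ccov_single {q : (𝒳 × 𝒴) × 𝒰 → ℝ} (hq0 : ∀ ω, 0 ≤ q ω) {u : 𝒰}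
    (F G : (𝒳 × 𝒴) × 𝒰 → ℝ)
    (hF : ∀ (a : 𝒳 × 𝒴) (u' : 𝒰), u' ≠ u → F (a, u') = 0)
    (hG : ∀ (a : 𝒳 × 𝒴) (u' : 𝒰), u' ≠ u → G (a, u') = 0) :
    ccov q Prod.snd F G = Wt q u *
      ccov (cnd q u) (fun _ => ()) (fun a => F (a, u)) (fun a => G (a, u)) := by
  rw [ccov_decomp hq0]
  rw [Finset.sum_eq_single u]
  · intro u' _ hne
    have e1 : (fun a : 𝒳 × 𝒴 => F (a, u')) = fun _ => (0 : ℝ) :=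
      funext fun a => hF a u' hne
    rw [e1, ccov_zero_left, mul_zero]
  · intro h
    exact absurd (Finset.mem_univ u) h

lemma ccorr_single {q : (𝒳 × 𝒴) × 𝒰 → ℝ} (hq0 : ∀ ω, 0 ≤ q ω) {u : 𝒰}
    (hW : Wt q u ≠ 0) (F G : (𝒳 × 𝒴) × 𝒰 → ℝ)
    (hF : ∀ (a : 𝒳 × 𝒴) (u' : 𝒰), u' ≠ u → F (a, u') = 0)
    (hG : ∀ (a : 𝒳 × 𝒴) (u' : 𝒰), u' ≠ u → G (a, u') = 0) :
    ccorr q Prod.snd F G =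
      ccorr (cnd q u) (fun _ => ()) (fun a => F (a, u)) (fun a => G (a, u)) := by
  have hWpos : 0 < Wt q u := (Wt_nonneg hq0 u).lt_of_ne (Ne.symm hW)
  have hc := ccov_single hq0 F G hF hG
  have hvF := ccov_single hq0 F F hF hF
  have hvG := ccov_single hq0 G G hG hG
  unfold ccorr cvar
  rw [hc, hvF, hvG]
  set A := ccov (cnd q u) (fun _ => ()) (fun a => F (a, u)) (fun a => F (a, u)) with hA
  set B := ccov (cnd q u) (fun _ => ()) (fun a => G (a, u)) (fun a => G (a, u)) with hB
  set C := ccov (cnd q u) (fun _ => ()) (fun a => F (a, u)) (fun a => G (a, u)) with hC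
  have hWW : (0 : ℝ) < Wt q u * Wt q u := mul_pos hWpos hWpos
  have hiff : (0 < Wt q u * A * (Wt q u * B)) ↔ 0 < A * B := by
    rw [show Wt q u * A * (Wt q u * B) = Wt q u * Wt q u * (A * B) from by ring]
    exact mul_pos_iff_of_pos_left hWW
  by_cases hAB : 0 < A * B
  · rw [if_pos hAB, if_pos (hiff.mpr hAB)]
    rw [Real.sqrt_mul hWpos.le A, Real.sqrt_mul hWpos.le B,
      show Real.sqrt (Wt q u) * Real.sqrt A * (Real.sqrt (Wt q u) * Real.sqrt B)
        = Real.sqrt (Wt q u) * Real.sqrt (Wt q u) * (Real.sqrt A * Real.sqrt B) from by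
          ring,
      Real.mul_self_sqrt hWpos.le]
    exact mul_div_mul_left _ _ (ne_of_gt hWpos)
  · rw [if_neg hAB, if_neg (fun hcon => hAB (hiff.mp hcon))]

lemma maxCorr_le_of {q : (𝒳 × 𝒴) × 𝒰 → ℝ} (hq0 : ∀ ω, 0 ≤ q ω) {M : ℝ}
    (hM : 0 ≤ M) (hρ : ∀ u, Wt q u ≠ 0 → rho (cnd q u) ≤ M) :
    maxCorr q Prod.snd (fun a => a.1.1) (fun a => a.1.2) ≤ M := by
  apply maxCorr_le
  intro f g
  show ccorr q Prod.snd (fun ω => f (ω.1.1, ω.2)) (fun ω => g (ω.1.2, ω.2)) ≤ M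
  set F : (𝒳 × 𝒴) × 𝒰 → ℝ := fun ω => f (ω.1.1, ω.2) with hFdef
  set G : (𝒳 × 𝒴) × 𝒰 → ℝ := fun ω => g (ω.1.2, ω.2) with hGdef
  have hx : ∀ u, 0 ≤ Wt q u * cvar (cnd q u) (fun _ => ()) (fun a => F (a, u)) := by
    intro u
    by_cases hW : Wt q u = 0
    · rw [hW, zero_mul]
    · exact mul_nonneg (Wt_nonneg hq0 u) (cvar_nonneg (cnd_nonneg hq0 u) _ _)
  have hy : ∀ u, 0 ≤ Wt q u * cvar (cnd q u) (fun _ => ()) (fun a => G (a, u)) := by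
    intro u
    by_cases hW : Wt q u = 0
    · rw [hW, zero_mul]
    · exact mul_nonneg (Wt_nonneg hq0 u) (cvar_nonneg (cnd_nonneg hq0 u) _ _)
  have hkey : ccov q Prod.snd F G ≤ M *
      (Real.sqrt (cvar q Prod.snd F) * Real.sqrt (cvar q Prod.snd G)) := by
    rw [ccov_decomp hq0 F G, cvar_decomp hq0 F, cvar_decomp hq0 G]
    have step1 : ∀ u : 𝒰,
        Wt q u * ccov (cnd q u) (fun _ => ()) (fun a => F (a, u)) (fun a => G (a, u))
        ≤ M * (Real.sqrt (Wt q u * cvar (cnd q u) (fun _ => ()) (fun a => F (a, u))) *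
            Real.sqrt (Wt q u * cvar (cnd q u) (fun _ => ()) (fun a => G (a, u)))) := by
      intro u
      by_cases hW : Wt q u = 0
      · rw [hW]
        simp
      · have hWpos : 0 < Wt q u := (Wt_nonneg hq0 u).lt_of_ne (Ne.symm hW)
        have h1 := ccov_le_rho (cnd_nonneg hq0 u) (sum_cnd hW)
          (fun a => F (a, u)) (fun a => G (a, u))
          ⟨fun z => f (z.1, u), rfl⟩ ⟨fun z => g (z.1, u), rfl⟩
        have h2 : rho (cnd q u) ≤ M := hρ u hW
        have hsq : 0 ≤ Real.sqrt (cvar (cnd q u) (fun _ => ()) (fun a => F (a, u))) *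
            Real.sqrt (cvar (cnd q u) (fun _ => ()) (fun a => G (a, u))) :=
          mul_nonneg (Real.sqrt_nonneg _) (Real.sqrt_nonneg _)
        have h3 : ccov (cnd q u) (fun _ => ()) (fun a => F (a, u)) (fun a => G (a, u))
            ≤ M * (Real.sqrt (cvar (cnd q u) (fun _ => ()) (fun a => F (a, u))) *
              Real.sqrt (cvar (cnd q u) (fun _ => ()) (fun a => G (a, u)))) :=
          h1.trans (mul_le_mul_of_nonneg_right h2 hsq)
        have h4 := mul_le_mul_of_nonneg_left h3 hWpos.le
        have hss : Real.sqrt (Wt q u) ^ 2 = Wt q u := Real.sq_sqrt hWpos.le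
        calc Wt q u * ccov (cnd q u) (fun _ => ()) (fun a => F (a, u)) (fun a => G (a, u))
            ≤ Wt q u * (M * (Real.sqrt (cvar (cnd q u) (fun _ => ()) (fun a => F (a, u))) *
              Real.sqrt (cvar (cnd q u) (fun _ => ()) (fun a => G (a, u))))) := h4
          _ = M * (Real.sqrt (Wt q u * cvar (cnd q u) (fun _ => ()) (fun a => F (a, u))) *
              Real.sqrt (Wt q u * cvar (cnd q u) (fun _ => ()) (fun a => G (a, u)))) := by
              rw [Real.sqrt_mul hWpos.le, Real.sqrt_mul hWpos.le]
              linear_combination (-(M * Real.sqrt (cvar (cnd q u) (fun _ => ())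
                fun a => F (a, u)) * Real.sqrt (cvar (cnd q u) (fun _ => ())
                fun a => G (a, u)))) * hss
    calc ∑ u, Wt q u * ccov (cnd q u) (fun _ => ())
          (fun a => F (a, u)) (fun a => G (a, u))
        ≤ ∑ u, M * (Real.sqrt (Wt q u * cvar (cnd q u) (fun _ => ()) (fun a => F (a, u))) *
            Real.sqrt (Wt q u * cvar (cnd q u) (fun _ => ()) (fun a => G (a, u)))) :=
          Finset.sum_le_sum fun u _ => step1 u
      _ = M * ∑ u, Real.sqrt (Wt q u * cvar (cnd q u) (fun _ => ()) (fun a => F (a, u))) *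
            Real.sqrt (Wt q u * cvar (cnd q u) (fun _ => ()) (fun a => G (a, u))) := by
          rw [Finset.mul_sum]
      _ ≤ M * (Real.sqrt (∑ u, Wt q u * cvar (cnd q u) (fun _ => ()) (fun a => F (a, u))) *
            Real.sqrt (∑ u, Wt q u * cvar (cnd q u) (fun _ => ()) (fun a => G (a, u)))) :=
          mul_le_mul_of_nonneg_left (sum_sqrt_cs hx hy) hM
  unfold ccorr
  split
  · next hpos =>
    have h1 : 0 ≤ cvar q Prod.snd F := cvar_nonneg hq0 _ _
    have hsq : 0 < Real.sqrt (cvar q Prod.snd F) * Real.sqrt (cvar q Prod.snd G) := by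
      rcases mul_pos_iff.mp hpos with ⟨ha, hb⟩ | ⟨ha, hb⟩
      · exact mul_pos (Real.sqrt_pos.2 ha) (Real.sqrt_pos.2 hb)
      · linarith
    rw [div_le_iff₀ hsq]
    exact hkey
  · exact hM

lemma rho_le_maxCorr {q : (𝒳 × 𝒴) × 𝒰 → ℝ} (hq0 : ∀ ω, 0 ≤ q ω) {u : 𝒰}
    (hW : Wt q u ≠ 0) :
    rho (cnd q u) ≤ maxCorr q Prod.snd (fun a => a.1.1) (fun a => a.1.2) := by
  have key : ∀ (f : 𝒳 × Unit → ℝ) (g : 𝒴 × Unit → ℝ),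
      ccorr (cnd q u) (fun _ => ()) (fun a => f (a.1, ())) (fun a => g (a.2, ()))
        ≤ maxCorr q Prod.snd (fun a => a.1.1) (fun a => a.1.2) := by
    intro f g
    have heq := ccorr_single hq0 hW
      (fun ω => if ω.2 = u then f (ω.1.1, ()) else 0)
      (fun ω => if ω.2 = u then g (ω.1.2, ()) else 0)
      (fun a u' hne => by simp [hne]) (fun a u' hne => by simp [hne])
    have eF : (fun a : 𝒳 × 𝒴 => if ((a, u) : (𝒳 × 𝒴) × 𝒰).2 = u then f ((a, u).1.1, ()) else 0)
        = fun a : 𝒳 × 𝒴 => f (a.1, ()) := funext fun a => by simp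
    have eG : (fun a : 𝒳 × 𝒴 => if ((a, u) : (𝒳 × 𝒴) × 𝒰).2 = u then g ((a, u).1.2, ()) else 0)
        = fun a : 𝒳 × 𝒴 => g (a.2, ()) := funext fun a => by simp
    rw [eF, eG] at heq
    rw [← heq]
    exact le_maxCorr hq0 Prod.snd (fun a => a.1.1) (fun a => a.1.2)
      (fun z => if z.2 = u then f (z.1, ()) else 0)
      (fun z => if z.2 = u then g (z.1, ()) else 0)
  unfold rho maxCorr
  exact ciSup_le fun f => ciSup_le fun g => key f g

end AuxC

section AuxD

open Finset

variable {𝒳 𝒴 𝒰 : Type} [Fintype 𝒳] [Fintype 𝒴] [Fintype 𝒰]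

/-- Entropy of a distribution on `𝒳 × 𝒴`. -/
def Hr (r : 𝒳 × 𝒴 → ℝ) : ℝ := ∑ a, -(r a * Real.logb 2 (r a))

lemma ent_pair_eq (q : (𝒳 × 𝒴) × 𝒰 → ℝ) :
    ent q (fun ω => (Prod.fst ω, Prod.snd ω)) = ∑ ω, -(q ω * Real.logb 2 (q ω)) := by
  unfold ent
  refine Finset.sum_congr rfl fun z _ => ?_
  have hm : marg q (fun ω => (Prod.fst ω, Prod.snd ω)) z = q z := by
    unfold marg
    simp
  rw [hm]

lemma ent_snd_eq (q : (𝒳 × 𝒴) × 𝒰 → ℝ) :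
    ent q Prod.snd = ∑ u, -(Wt q u * Real.logb 2 (Wt q u)) := by
  unfold ent
  exact Finset.sum_congr rfl fun u _ => by rw [marg_snd]

lemma nlog_decomp {q : (𝒳 × 𝒴) × 𝒰 → ℝ} (hq0 : ∀ ω, 0 ≤ q ω) :
    ∑ ω, -(q ω * Real.logb 2 (q ω)) =
      (∑ u, -(Wt q u * Real.logb 2 (Wt q u))) + ∑ u, Wt q u * Hr (cnd q u) := by
  rw [Fintype.sum_prod_type_right, ← Finset.sum_add_distrib]
  refine Finset.sum_congr rfl fun u _ => ?_
  by_cases hW : Wt q u = 0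
  · have hz : ∀ a, q (a, u) = 0 := q_zero hq0 hW
    simp [hW, hz]
  · have step : ∀ a : 𝒳 × 𝒴, -(q (a, u) * Real.logb 2 (q (a, u)))
        = -(Wt q u * cnd q u a * Real.logb 2 (Wt q u))
          + -(Wt q u * (cnd q u a * Real.logb 2 (cnd q u a))) := by
      intro a
      by_cases hr : cnd q u a = 0
      · have : q (a, u) = 0 := by rw [q_eq_cnd hW a, hr, mul_zero]
        rw [this, hr]
        simp
      · rw [q_eq_cnd hW a, Real.logb_mul hW hr]
        ring
    rw [Finset.sum_congr rfl fun a _ => step a, Finset.sum_add_distrib]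
    have e1 : ∑ a, -(Wt q u * cnd q u a * Real.logb 2 (Wt q u))
        = -(Wt q u * Real.logb 2 (Wt q u)) := by
      have e : ∀ a : 𝒳 × 𝒴, -(Wt q u * cnd q u a * Real.logb 2 (Wt q u))
          = cnd q u a * -(Wt q u * Real.logb 2 (Wt q u)) := fun a => by ring
      rw [Finset.sum_congr rfl fun a _ => e a, ← Finset.sum_mul, sum_cnd hW, one_mul]
    have e2 : ∑ a, -(Wt q u * (cnd q u a * Real.logb 2 (cnd q u a)))
        = Wt q u * Hr (cnd q u) := by
      unfold Hr
      rw [Finset.mul_sum]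
      exact Finset.sum_congr rfl fun a _ => by ring
    rw [e1, e2]

lemma mutInfo_decomp {q : (𝒳 × 𝒴) × 𝒰 → ℝ} (hq0 : ∀ ω, 0 ≤ q ω) :
    mutInfo q Prod.fst Prod.snd = ent q Prod.fst - ∑ u, Wt q u * Hr (cnd q u) := by
  unfold mutInfo
  rw [ent_pair_eq, nlog_decomp hq0, ent_snd_eq]
  ring

lemma ent_fst_eq {q : (𝒳 × 𝒴) × 𝒰 → ℝ} {p : 𝒳 × 𝒴 → ℝ}
    (h : ∀ a, marg q Prod.fst a = p a) :
    ent q Prod.fst = ∑ a, -(p a * Real.logb 2 (p a)) := by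
  unfold ent
  exact Finset.sum_congr rfl fun a _ => by rw [h]

end AuxD

section AuxE

open Finset

lemma exists_pos_of_sum_zero {ι : Type} [Fintype ι] {m : ι → ℝ}
    (hsum : ∑ i, m i = 0) (hne : ∃ i, m i ≠ 0) : ∃ i, 0 < m i := by
  by_contra hcon
  push_neg at hcon
  obtain ⟨i, hi⟩ := hne
  have := (Finset.sum_eq_zero_iff_of_nonpos (fun j _ => hcon j)).mp hsum
  exact hi (this i (Finset.mem_univ i))

lemma reduce_support {E : Type} [AddCommGroup E] [Module ℝ E] [FiniteDimensional ℝ E]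
    {ι : Type} [Fintype ι] (y : ι → E) (L : E →ₗ[ℝ] ℝ) {n : ℕ}
    (hn : Module.finrank ℝ E ≤ n) :
    ∀ (k : ℕ) (c : ι → ℝ), (Finset.univ.filter fun i => c i ≠ 0).card ≤ k →
      (∀ i, 0 ≤ c i) → (∀ i, c i ≠ 0 → L (y i) = 1) →
      ∀ i0 : ι, 0 < c i0 →
      ∃ c' : ι → ℝ, (∀ i, 0 ≤ c' i) ∧ 0 < c' i0 ∧ (∀ i, c' i ≠ 0 → c i ≠ 0) ∧
        (Finset.univ.filter fun i => c' i ≠ 0).card ≤ n ∧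
        ∑ i, c' i • y i = ∑ i, c i • y i := by
  intro k
  induction k with
  | zero =>
    intro c hcard hc0 hL i0 hi0
    exfalso
    have hmem : i0 ∈ Finset.univ.filter fun i => c i ≠ 0 :=
      Finset.mem_filter.mpr ⟨Finset.mem_univ i0, ne_of_gt hi0⟩
    have := Finset.card_pos.mpr ⟨i0, hmem⟩
    omega
  | succ k ih =>
    intro c hcard hc0 hL i0 hi0
    by_cases hle : (Finset.univ.filter fun i => c i ≠ 0).card ≤ n
    · exact ⟨c, hc0, hi0, fun _ h => h, hle, rfl⟩
    push_neg at hle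
    set t : Finset ι := Finset.univ.filter fun i => c i ≠ 0 with ht
    -- extract a linear dependence among the supported points
    have hdep : ¬ LinearIndependent ℝ (fun i : t => y i) := by
      intro h
      have := h.fintype_card_le_finrank
      rw [Fintype.card_coe] at this
      omega
    obtain ⟨g, hg0, j, hgj⟩ := Fintype.not_linearIndependent_iff.mp hdep
    classical
    set lam : ι → ℝ := fun i => if h : i ∈ t then g ⟨i, h⟩ else 0 with hlam
    have hlam_supp : ∀ i, lam i ≠ 0 → c i ≠ 0 := by
      intro i hi
      by_contra hci
      have : i ∉ t := by simp [ht, hci]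
      simp [hlam, this] at hi
    have hlam_sum : ∑ i, lam i • y i = 0 := by
      have h1 : ∑ i, lam i • y i = ∑ i ∈ t, lam i • y i := by
        refine (Finset.sum_subset (Finset.subset_univ t) ?_).symm
        intro i _ hit
        simp [hlam, hit]
      have h2 : ∑ i ∈ t, lam i • y i = ∑ i : t, g i • y i := by
        rw [Finset.univ_eq_attach, ← Finset.sum_attach t (fun i => lam i • y i)]
        exact Finset.sum_congr rfl fun i _ => by simp [hlam, i.2]
      rw [h1, h2, hg0]
    have hlam_sum0 : ∑ i, lam i = 0 := by
      have h1 := congrArg L hlam_sum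
      rw [map_sum, map_zero] at h1
      simp only [map_smul, smul_eq_mul] at h1
      rw [← h1]
      refine Finset.sum_congr rfl fun i _ => ?_
      by_cases hi : lam i = 0
      · rw [hi, zero_mul]
      · rw [hL i (hlam_supp i hi), mul_one]
    have hlam_ne : ∃ i, lam i ≠ 0 := by
      refine ⟨j, ?_⟩
      simp only [hlam, dif_pos j.2]
      simpa using hgj
    -- replace lam by a direction mu with mu i0 ≤ 0 and a positive entry
    obtain ⟨mu, hmu_sumy, hmu_sum0, hmu_supp, hmu_i0, hmu_pos⟩ :
        ∃ mu : ι → ℝ, (∑ i, mu i • y i = 0) ∧ (∑ i, mu i = 0) ∧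
          (∀ i, mu i ≠ 0 → c i ≠ 0) ∧ mu i0 ≤ 0 ∧ ∃ j', 0 < mu j' := by
      by_cases h0 : lam i0 ≤ 0
      · exact ⟨lam, hlam_sum, hlam_sum0, hlam_supp, h0,
          exists_pos_of_sum_zero hlam_sum0 hlam_ne⟩
      · push_neg at h0
        refine ⟨fun i => -lam i, ?_, ?_, ?_, ?_, ?_⟩
        · simp only [neg_smul]
          rw [Finset.sum_neg_distrib, hlam_sum, neg_zero]
        · rw [Finset.sum_neg_distrib, hlam_sum0, neg_zero]
        · intro i hi
          exact hlam_supp i (by simpa using hi)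
        · simpa using h0.le
        · have : ∑ i, -lam i = 0 := by rw [Finset.sum_neg_distrib, hlam_sum0, neg_zero]
          refine exists_pos_of_sum_zero this ?_
          obtain ⟨i, hi⟩ := hlam_ne
          exact ⟨i, by simpa using hi⟩
    -- choose the step size
    set s : Finset ι := Finset.univ.filter fun i => 0 < mu i with hs
    have hs_ne : s.Nonempty := by
      obtain ⟨j', hj'⟩ := hmu_pos
      exact ⟨j', Finset.mem_filter.mpr ⟨Finset.mem_univ j', hj'⟩⟩
    obtain ⟨j0, hj0s, hj0min⟩ := Finset.exists_min_image s (fun i => c i / mu i) hs_ne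
    have hmuj0 : 0 < mu j0 := (Finset.mem_filter.mp hj0s).2
    have hcj0 : 0 < c j0 :=
      (hc0 j0).lt_of_ne (Ne.symm (hmu_supp j0 (ne_of_gt hmuj0)))
    set τ : ℝ := c j0 / mu j0 with hτ
    have hτpos : 0 < τ := div_pos hcj0 hmuj0
    set c2 : ι → ℝ := fun i => c i - τ * mu i with hc2
    have hc20 : ∀ i, 0 ≤ c2 i := by
      intro i
      by_cases hpos : 0 < mu i
      · have hmem : i ∈ s := Finset.mem_filter.mpr ⟨Finset.mem_univ i, hpos⟩
        have := hj0min i hmem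
        have h2 : τ * mu i ≤ c i := by
          rw [← le_div_iff₀ hpos]
          exact this
        simp only [hc2]
        linarith
      · push_neg at hpos
        have : τ * mu i ≤ 0 := mul_nonpos_of_nonneg_of_nonpos hτpos.le hpos
        simp only [hc2]
        linarith [hc0 i]
    have hc2i0 : 0 < c2 i0 := by
      have : τ * mu i0 ≤ 0 := mul_nonpos_of_nonneg_of_nonpos hτpos.le hmu_i0
      simp only [hc2]
      linarith
    have hc2supp : ∀ i, c2 i ≠ 0 → c i ≠ 0 := by
      intro i hi hci
      have hmi : mu i = 0 := by
        by_contra hmi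
        exact hmu_supp i hmi hci
      apply hi
      simp [hc2, hci, hmi]
    have hc2j0 : c2 j0 = 0 := by
      simp only [hc2, hτ]
      rw [div_mul_cancel₀ _ (ne_of_gt hmuj0)]
      ring
    have hcard2 : (Finset.univ.filter fun i => c2 i ≠ 0).card ≤ k := by
      have hss : (Finset.univ.filter fun i => c2 i ≠ 0) ⊆ t.erase j0 := by
        intro i hi
        have hi2 : c2 i ≠ 0 := (Finset.mem_filter.mp hi).2
        refine Finset.mem_erase.mpr ⟨?_, ?_⟩
        · rintro rfl
          exact hi2 hc2j0
        · exact Finset.mem_filter.mpr ⟨Finset.mem_univ i, hc2supp i hi2⟩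
      have hj0t : j0 ∈ t :=
        Finset.mem_filter.mpr ⟨Finset.mem_univ j0, ne_of_gt hcj0⟩
      have := Finset.card_le_card hss
      have hce : (t.erase j0).card = t.card - 1 := Finset.card_erase_of_mem hj0t
      have htpos : 0 < t.card := Finset.card_pos.mpr ⟨j0, hj0t⟩
      omega
    have hsum2 : ∑ i, c2 i • y i = ∑ i, c i • y i := by
      simp only [hc2, sub_smul]
      rw [Finset.sum_sub_distrib]
      have : ∑ i, (τ * mu i) • y i = τ • ∑ i, mu i • y i := by
        rw [Finset.smul_sum]
        exact Finset.sum_congr rfl fun i _ => by rw [smul_smul]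
      rw [this, hmu_sumy, smul_zero, sub_zero]
    obtain ⟨c', h1, h2, h3, h4, h5⟩ :=
      ih c2 hcard2 hc20 (fun i hi => hL i (hc2supp i hi)) i0 hc2i0
    exact ⟨c', h1, h2, fun i hi => hc2supp i (h3 i hi), h4, h5.trans hsum2⟩

end AuxE

/-- Cardinality bound for `C_β`. For every finite-alphabet auxiliary `U`
jointly distributed with `(X,Y)` satisfying `ρ_m(X;Y|U) ≤ β`, there is an auxiliary `U'`
on an alphabet of size at most `|𝒳|·|𝒴| + 1` with the same joint `(X,Y)`-marginal, the
same conditional maximal correlation, and the same mutual information; hence the infimum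
defining `C_β(X;Y)` may be restricted to alphabets of size at most `|𝒳|·|𝒴| + 1`. -/
theorem Cbeta_cardinality_bound {𝒳 𝒴 : Type} [Fintype 𝒳] [Fintype 𝒴]
    (p : 𝒳 × 𝒴 → ℝ) (hp : IsPMF p) (β : ℝ) (hβ0 : 0 ≤ β) (hβ1 : β ≤ 1)
    (𝒰 : Type) [Fintype 𝒰] (q : (𝒳 × 𝒴) × 𝒰 → ℝ) (hq : IsPMF q)
    (hmarg : ∀ a, marg q Prod.fst a = p a)
    (hcorr : maxCorr q Prod.snd (fun a => a.1.1) (fun a => a.1.2) ≤ β) :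
    ∃ (𝒰' : FinAlph) (q' : (𝒳 × 𝒴) × 𝒰' → ℝ),
      Fintype.card 𝒰' ≤ Fintype.card 𝒳 * Fintype.card 𝒴 + 1 ∧
      IsPMF q' ∧ (∀ a, marg q' Prod.fst a = p a) ∧
      maxCorr q' Prod.snd (fun a => a.1.1) (fun a => a.1.2) =
        maxCorr q Prod.snd (fun a => a.1.1) (fun a => a.1.2) ∧
      mutInfo q' Prod.fst Prod.snd = mutInfo q Prod.fst Prod.snd :=
    by
  classical
  obtain ⟨hq0, hq1⟩ := hq
  -- ambient space for the Carathéodory-type argument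
  let L : (((𝒳 × 𝒴) → ℝ) × ℝ) →ₗ[ℝ] ℝ :=
    { toFun := fun z => ∑ a, z.1 a
      map_add' := fun z w => by simp [Finset.sum_add_distrib]
      map_smul' := fun r z => by simp [Finset.mul_sum] }
  let y : 𝒰 → ((𝒳 × 𝒴) → ℝ) × ℝ := fun u => (cnd q u, Hr (cnd q u))
  have hL1 : ∀ u, Wt q u ≠ 0 → L (y u) = 1 := by
    intro u hW
    show (∑ a, cnd q u a) = 1
    exact sum_cnd hW
  -- an index of maximal conditional maximal correlation
  have hex : ∃ u, Wt q u ≠ 0 := by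
    by_contra h
    push_neg at h
    have h0 : ∑ u, Wt q u = 0 := Finset.sum_eq_zero fun u _ => h u
    rw [sum_Wt hq1] at h0
    norm_num at h0
  set T : Finset 𝒰 := Finset.univ.filter fun u => Wt q u ≠ 0 with hT
  have hT_ne : T.Nonempty := by
    obtain ⟨u, hu⟩ := hex
    exact ⟨u, Finset.mem_filter.mpr ⟨Finset.mem_univ u, hu⟩⟩
  obtain ⟨i0, hi0T, hi0max⟩ := Finset.exists_max_image T (fun u => rho (cnd q u)) hT_ne
  have hi0W : Wt q i0 ≠ 0 := (Finset.mem_filter.mp hi0T).2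
  have hi0pos : 0 < Wt q i0 := (Wt_nonneg hq0 i0).lt_of_ne (Ne.symm hi0W)
  set M : ℝ := rho (cnd q i0) with hMdef
  have hMnonneg : 0 ≤ M := maxCorr_nonneg (cnd_nonneg hq0 i0) _ _ _
  have hMmax : ∀ u, Wt q u ≠ 0 → rho (cnd q u) ≤ M := fun u hu =>
    hi0max u (Finset.mem_filter.mpr ⟨Finset.mem_univ u, hu⟩)
  have hmax_q : maxCorr q Prod.snd (fun a => a.1.1) (fun a => a.1.2) = M :=
    le_antisymm (maxCorr_le_of hq0 hMnonneg hMmax) (rho_le_maxCorr hq0 hi0W)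
  -- reduce the support
  have hrank : Module.finrank ℝ (((𝒳 × 𝒴) → ℝ) × ℝ)
      ≤ Fintype.card 𝒳 * Fintype.card 𝒴 + 1 := by
    rw [Module.finrank_prod, Module.finrank_pi, Module.finrank_self, Fintype.card_prod]
  obtain ⟨c', hc'0, hc'i0, hc'supp, hc'card, hc'sum⟩ :=
    reduce_support y L hrank (Fintype.card 𝒰) (Wt q)
      (Finset.card_filter_le _ _) (Wt_nonneg hq0) hL1 i0 hi0pos
  set s' : Finset 𝒰 := Finset.univ.filter fun u => c' u ≠ 0 with hs'
  have hi0s' : i0 ∈ s' := Finset.mem_filter.mpr ⟨Finset.mem_univ i0, ne_of_gt hc'i0⟩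
  have hWne : ∀ u ∈ s', Wt q u ≠ 0 := fun u hu => hc'supp u (Finset.mem_filter.mp hu).2
  -- componentwise consequences
  have hfst : ∀ a, ∑ u, c' u * cnd q u a = ∑ u, Wt q u * cnd q u a := by
    intro a
    have h := congrArg (fun z : ((𝒳 × 𝒴) → ℝ) × ℝ => z.1 a) hc'sum
    simp only [Prod.fst_sum, Finset.sum_apply, Prod.smul_fst, Pi.smul_apply,
      smul_eq_mul, y] at h
    exact h
  have hsnd : ∑ u, c' u * Hr (cnd q u) = ∑ u, Wt q u * Hr (cnd q u) := by
    have h := congrArg Prod.snd hc'sum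
    simp only [Prod.snd_sum, Prod.smul_snd, smul_eq_mul, y] at h
    exact h
  have hWcnd : ∀ a, ∑ u, Wt q u * cnd q u a = marg q Prod.fst a := by
    intro a
    rw [marg_fst]
    refine Finset.sum_congr rfl fun u _ => ?_
    by_cases hW : Wt q u = 0
    · rw [hW, zero_mul, q_zero hq0 hW]
    · rw [← q_eq_cnd hW]
  have hmargP : ∀ a, ∑ u, c' u * cnd q u a = p a := fun a =>
    (hfst a).trans ((hWcnd a).trans (hmarg a))
  have hsumc' : ∑ u, c' u = 1 := by
    have h := congrArg L hc'sum
    rw [map_sum, map_sum] at h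
    simp only [map_smul, smul_eq_mul] at h
    have e1 : ∑ u, c' u * L (y u) = ∑ u, c' u := by
      refine Finset.sum_congr rfl fun u _ => ?_
      by_cases hc : c' u = 0
      · rw [hc, zero_mul]
      · rw [hL1 u (hc'supp u hc), mul_one]
    have e2 : ∑ u, Wt q u * L (y u) = ∑ u, Wt q u := by
      refine Finset.sum_congr rfl fun u _ => ?_
      by_cases hc : Wt q u = 0
      · rw [hc, zero_mul]
      · rw [hL1 u hc, mul_one]
    rw [e1, e2, sum_Wt hq1] at h
    exact h
  -- the reduced auxiliary variable
  set q' : (𝒳 × 𝒴) × {u : 𝒰 // u ∈ s'} → ℝ :=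
    fun z => c' z.2.1 * cnd q z.2.1 z.1 with hq'def
  have hq'0 : ∀ z, 0 ≤ q' z := fun z =>
    mul_nonneg (hc'0 _) (cnd_nonneg hq0 _ _)
  have hsubsum : ∀ F : 𝒰 → ℝ, ∑ u' : {u : 𝒰 // u ∈ s'}, F u'.1 = ∑ u ∈ s', F u := by
    intro F
    rw [Finset.univ_eq_attach]
    exact Finset.sum_attach s' F
  have hfill : ∀ F : 𝒰 → ℝ, ∑ u ∈ s', c' u * F u = ∑ u, c' u * F u := by
    intro F
    refine Finset.sum_subset (Finset.subset_univ _) ?_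
    intro u _ hu
    have hcu : c' u = 0 := by
      by_contra hne
      exact hu (Finset.mem_filter.mpr ⟨Finset.mem_univ u, hne⟩)
    rw [hcu, zero_mul]
  have hW' : ∀ u' : {u : 𝒰 // u ∈ s'}, Wt q' u' = c' u'.1 := by
    intro u'
    show (∑ a, c' u'.1 * cnd q u'.1 a) = c' u'.1
    rw [← Finset.mul_sum, sum_cnd (hWne u'.1 u'.2), mul_one]
  have hc'ne : ∀ u' : {u : 𝒰 // u ∈ s'}, c' u'.1 ≠ 0 := fun u' =>
    (Finset.mem_filter.mp u'.2).2
  have hcnd' : ∀ u' : {u : 𝒰 // u ∈ s'}, cnd q' u' = cnd q u'.1 := by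
    intro u'
    funext a
    show q' (a, u') / Wt q' u' = cnd q u'.1 a
    rw [hW']
    exact mul_div_cancel_left₀ _ (hc'ne u')
  -- marginal of q'
  have hmarg' : ∀ a, marg q' Prod.fst a = p a := by
    intro a
    rw [marg_fst]
    have : ∑ u' : {u : 𝒰 // u ∈ s'}, q' (a, u')
        = ∑ u' : {u : 𝒰 // u ∈ s'}, c' u'.1 * cnd q u'.1 a := rfl
    rw [this, hsubsum (fun u => c' u * cnd q u a), hfill (fun u => cnd q u a)]
    exact hmargP a
  refine ⟨⟨{u : 𝒰 // u ∈ s'}⟩, q', ?_, ⟨hq'0, ?_⟩, hmarg', ?_, ?_⟩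
  · -- cardinality
    calc Fintype.card {u : 𝒰 // u ∈ s'} = s'.card := Fintype.card_coe s'
      _ ≤ Fintype.card 𝒳 * Fintype.card 𝒴 + 1 := hc'card
  · -- sums to one
    rw [Fintype.sum_prod_type_right]
    have e1 : ∀ u' : {u : 𝒰 // u ∈ s'}, ∑ a, q' (a, u') = c' u'.1 := hW'
    rw [Finset.sum_congr rfl fun u' _ => e1 u']
    rw [hsubsum c']
    have := hfill (fun _ => 1)
    simp only [mul_one] at this
    rw [this, hsumc']
  · -- maximal correlation
    rw [hmax_q]
    refine le_antisymm ?_ ?_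
    · refine maxCorr_le_of hq'0 hMnonneg ?_
      intro u' _
      rw [hcnd' u']
      exact hMmax u'.1 (hWne u'.1 u'.2)
    · have hWi0' : Wt q' ⟨i0, hi0s'⟩ ≠ 0 := by
        rw [hW']
        exact ne_of_gt hc'i0
      have h := rho_le_maxCorr hq'0 hWi0'
      rwa [hcnd' ⟨i0, hi0s'⟩] at h
  · -- mutual information
    rw [mutInfo_decomp hq'0, mutInfo_decomp hq0, ent_fst_eq hmarg', ent_fst_eq hmarg]
    have e1 : ∀ u' : {u : 𝒰 // u ∈ s'}, Wt q' u' * Hr (cnd q' u')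
        = c' u'.1 * Hr (cnd q u'.1) := fun u' => by rw [hW', hcnd']
    rw [Finset.sum_congr rfl fun u' _ => e1 u',
      hsubsum (fun u => c' u * Hr (cnd q u)), hfill (fun u => Hr (cnd q u)), hsnd]


end GCI
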